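/- (One-step optimistic mirror descent bound, relaxed version of Lemma 15 of Chen et al.) Let 𝒦 ⊂ ℝ^d be a compact convex set, let ψ be a convex function differentiable on an open set containing 𝒦 and a point w′ ∈ ℝ^d (so that D_ψ(x, w′) = ψ(x) − ψ(w′) − ⟨∇ψ(w′), x − w′⟩ is defined for all x ∈ 𝒦), and let ℓ, m ∈ ℝ^d. Suppose w_t minimizes w ↦ ⟨m, w⟩ + D_ψ(w, w′) over 𝒦 and w″ minimizes w ↦ ⟨ℓ, w⟩ + D_ψ(w, w′) over 𝒦. Then for every u ∈ 𝒦: ⟨ℓ, w_t − u⟩ ≤ ⟨w_t − w″, ℓ − m⟩ + D_ψ(u, w′) − D_ψ(u, w″) − D_ψ(w″, w_t) − D_ψ(w_t, w′). In particular, w′ is not required to belong to 𝒦. -/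

import Mathlib

open RealInnerProductSpace

lemma first_order_min {E : Type*} [NormedAddCommGroup E] [NormedSpace ℝ E]
    {𝒦 : Set E} (hconv : Convex ℝ 𝒦) {F : E → ℝ} {F' : E →L[ℝ] ℝ} {w0 : E}
    (hw0 : w0 ∈ 𝒦) (hF : HasFDerivAt F F' w0)
    (hmin : ∀ v ∈ 𝒦, F w0 ≤ F v) {v : E} (hv : v ∈ 𝒦) : 0 ≤ F' (v - w0) := by
  have hmo : IsMinOn F 𝒦 w0 := isMinOn_iff.mpr hmin
  exact hmo.localize.hasFDerivWithinAt_nonneg hF.hasFDerivWithinAt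
    (sub_mem_posTangentConeAt_of_segment_subset (hconv.segment_subset hw0 hv))

/-- One-step optimistic mirror descent bound (relaxed version of Lemma 15 of
Chen et al.): `𝒦` is a compact convex set, `ψ` is a convex function with
gradient `g` on an open set `U` containing `𝒦` and the point `w'` (which need
not belong to `𝒦`), and `D` is the associated Bregman divergence.  If `wt`
minimizes `w ↦ ⟨m, w⟩ + D(w, w')` over `𝒦` and `w''` minimizes
`w ↦ ⟨ℓ, w⟩ + D(w, w')` over `𝒦`, then for every `u ∈ 𝒦` the stated one-step
regret inequality holds. -/
theorem optimistic_mirror_descent_one_step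
    (d : ℕ) (𝒦 : Set (EuclideanSpace ℝ (Fin d)))
    (hKcompact : IsCompact 𝒦) (hKconvex : Convex ℝ 𝒦)
    (ψ : EuclideanSpace ℝ (Fin d) → ℝ)
    (hψconvex : ConvexOn ℝ Set.univ ψ)
    (U : Set (EuclideanSpace ℝ (Fin d))) (hUopen : IsOpen U) (hKU : 𝒦 ⊆ U)
    (w' : EuclideanSpace ℝ (Fin d)) (hw'U : w' ∈ U)
    (g : EuclideanSpace ℝ (Fin d) → EuclideanSpace ℝ (Fin d))
    (hg : ∀ x ∈ U, HasGradientAt ψ (g x) x)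
    (ℓ m : EuclideanSpace ℝ (Fin d))
    (D : EuclideanSpace ℝ (Fin d) → EuclideanSpace ℝ (Fin d) → ℝ)
    (hD : ∀ y x, D y x = ψ y - ψ x - ⟪g x, y - x⟫)
    (wt w'' : EuclideanSpace ℝ (Fin d)) (hwt : wt ∈ 𝒦) (hw'' : w'' ∈ 𝒦)
    (hmin₁ : ∀ v ∈ 𝒦, ⟪m, wt⟫ + D wt w' ≤ ⟪m, v⟫ + D v w')
    (hmin₂ : ∀ v ∈ 𝒦, ⟪ℓ, w''⟫ + D w'' w' ≤ ⟪ℓ, v⟫ + D v w')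
    (u : EuclideanSpace ℝ (Fin d)) (hu : u ∈ 𝒦) :
    ⟪ℓ, wt - u⟫ ≤ ⟪wt - w'', ℓ - m⟫ + D u w' - D u w'' - D w'' wt - D wt w' := by
  
  have hderiv : ∀ c : EuclideanSpace ℝ (Fin d), ∀ x ∈ 𝒦,
      HasFDerivAt (fun w => ⟪c, w⟫ + D w w')
      (innerSL ℝ c + (InnerProductSpace.toDual ℝ _ (g x) - innerSL ℝ (g w'))) x := by
    intro c x hx
    have hψx : HasFDerivAt ψ (InnerProductSpace.toDual ℝ _ (g x)) x :=
      hasGradientAt_iff_hasFDerivAt.mp (hg x (hKU hx))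
    have h1 : HasFDerivAt (fun w : EuclideanSpace ℝ (Fin d) => ⟪c, w⟫) (innerSL ℝ c) x :=
      (innerSL ℝ c).hasFDerivAt
    have h2 : HasFDerivAt (fun w : EuclideanSpace ℝ (Fin d) => ⟪g w', w - w'⟫)
        (innerSL ℝ (g w')) x := by
      have := ((innerSL ℝ (g w')).hasFDerivAt (x := x)).sub_const ⟪g w', w'⟫
      exact this.congr_of_eventuallyEq (Filter.Eventually.of_forall fun w => by
        simp [inner_sub_right, innerSL_apply_apply])
    have key : HasFDerivAt (fun w => ⟪c, w⟫ + (ψ w - ψ w' - ⟪g w', w - w'⟫))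
        (innerSL ℝ c + (InnerProductSpace.toDual ℝ _ (g x) - innerSL ℝ (g w'))) x :=
      h1.add (((hψx.sub_const (ψ w')).sub h2))
    refine key.congr_of_eventuallyEq (Filter.Eventually.of_forall fun w => ?_)
    simp only [hD]
  have hA : 0 ≤ ⟪m, w'' - wt⟫ + (⟪g wt, w'' - wt⟫ - ⟪g w', w'' - wt⟫) := by
    have := first_order_min hKconvex hwt (hderiv m wt hwt) hmin₁ hw''
    simpa only [ContinuousLinearMap.add_apply, ContinuousLinearMap.sub_apply,
      innerSL_apply_apply, InnerProductSpace.toDual_apply_apply] using this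
  have hB : 0 ≤ ⟪ℓ, u - w''⟫ + (⟪g w'', u - w''⟫ - ⟪g w', u - w''⟫) := by
    have := first_order_min hKconvex hw'' (hderiv ℓ w'' hw'') hmin₂ hu
    simpa only [ContinuousLinearMap.add_apply, ContinuousLinearMap.sub_apply,
      innerSL_apply_apply, InnerProductSpace.toDual_apply_apply] using this
  simp only [hD, inner_sub_left, inner_sub_right] at *
  linarith [real_inner_comm wt ℓ, real_inner_comm w'' ℓ, real_inner_comm wt m,
    real_inner_comm w'' m]
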